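/- Let n be a positive integer and let x1, x2, x3, x4 be vectors in ℝ^{D_in}. For the one-hidden-layer linear network f_θ(x) = n^{-1/2} Σ_{i=1}^n V_i (Σ_{α=1}^{D_in} U_{iα} x_α) with independent standard Gaussian parameters, the fourth moment satisfies exactly E[f_θ(x1) f_θ(x2) f_θ(x3) f_θ(x4)] = (1 + 2/n) · (⟨x1,x2⟩⟨x3,x4⟩ + ⟨x1,x3⟩⟨x2,x4⟩ + ⟨x1,x4⟩⟨x2,x3⟩). In particular the four-point correlation function is O(n^0) and its connected part is O(n^{-1}) as n → ∞. -/

import Mathlib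

open MeasureTheory ProbabilityTheory Asymptotics Filter

/-- The standard Gaussian measure on `ι → ℝ`: all coordinates are independent `N(0,1)`. -/
noncomputable def stdGaussian (ι : Type*) [Fintype ι] : Measure (ι → ℝ) :=
  Measure.pi fun _ => gaussianReal 0 1

/-- The one-hidden-layer linear network of width `n`:
`f_θ(x) = n^{-1/2} Σ_i V_i (Σ_α U_{iα} x_α)`. -/
noncomputable def net1 (n D : ℕ) (θ : (Fin n ⊕ Fin n × Fin D) → ℝ) (x : Fin D → ℝ) : ℝ :=
  ((n : ℝ) ^ (-(1 / 2 : ℝ))) *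
    ∑ i : Fin n, θ (Sum.inl i) * ∑ α : Fin D, θ (Sum.inr (i, α)) * x α

/-- The four-point correlation function of the one-hidden-layer linear network at width `n`. -/
noncomputable def fourPoint (n D : ℕ) (x1 x2 x3 x4 : Fin D → ℝ) : ℝ :=
  ∫ θ, net1 n D θ x1 * net1 n D θ x2 * net1 n D θ x3 * net1 n D θ x4
    ∂(stdGaussian (Fin n ⊕ Fin n × Fin D))

/-- The Euclidean inner product on `ℝ^D`. -/
def ip {D : ℕ} (x y : Fin D → ℝ) : ℝ := ∑ α : Fin D, x α * y α

open Real

noncomputable def Mo (k : ℕ) : ℝ := ∫ x, x ^ k ∂gaussianReal 0 1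

lemma gaussianPDFReal_01 (x : ℝ) :
    gaussianPDFReal 0 1 x = (Real.sqrt (2 * π))⁻¹ * Real.exp (-(1/2) * x ^ 2) := by
  rw [gaussianPDFReal]
  push_cast
  rw [mul_one, sub_zero]
  congr 1
  ring

lemma gaussianReal01_eq :
    gaussianReal 0 1 =
      volume.withDensity fun x => ((gaussianPDFReal 0 1 x).toNNReal : ENNReal) := by
  rw [gaussianReal_of_var_ne_zero 0 one_ne_zero, gaussianPDF_def]
  rfl

lemma pdf_smul_eq (g : ℝ → ℝ) :
    (fun x => (gaussianPDFReal 0 1 x).toNNReal • g x) = fun x => gaussianPDFReal 0 1 x * g x :=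
  funext fun x => by
    rw [NNReal.smul_def, Real.coe_toNNReal _ (gaussianPDFReal_nonneg 0 1 x), smul_eq_mul]

lemma integral_gaussianReal01 (g : ℝ → ℝ) :
    ∫ x, g x ∂gaussianReal 0 1 = ∫ x, gaussianPDFReal 0 1 x * g x := by
  rw [gaussianReal01_eq,
    integral_withDensity_eq_integral_smul (measurable_gaussianPDFReal 0 1).real_toNNReal g,
    pdf_smul_eq]

lemma integrable_gaussianReal01_iff (g : ℝ → ℝ) :
    Integrable g (gaussianReal 0 1) ↔
      Integrable (fun x => gaussianPDFReal 0 1 x * g x) volume := by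
  rw [gaussianReal01_eq,
    integrable_withDensity_iff_integrable_smul (measurable_gaussianPDFReal 0 1).real_toNNReal,
    pdf_smul_eq]

lemma integrable_pow_exp (k : ℕ) :
    Integrable (fun x : ℝ => x ^ k * Real.exp (-(1/2) * x ^ 2)) volume := by
  have := integrable_rpow_mul_exp_neg_mul_sq (b := 1/2) (by norm_num) (s := (k : ℝ))
    (lt_of_lt_of_le (by norm_num) (Nat.cast_nonneg k))
  refine this.congr (Filter.Eventually.of_forall fun x => ?_)
  simp only [Real.rpow_natCast]

lemma integrable_pow_gauss (k : ℕ) :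
    Integrable (fun x : ℝ => x ^ k) (gaussianReal 0 1) := by
  rw [integrable_gaussianReal01_iff]
  refine (((integrable_pow_exp k).const_mul ((Real.sqrt (2 * π))⁻¹)).congr
    (Filter.Eventually.of_forall fun x => ?_))
  simp only [gaussianPDFReal_01]
  ring

lemma Mo_zero : Mo 0 = 1 := by simp [Mo]

lemma Mo_odd {k : ℕ} (hk : Odd k) : Mo k = 0 := by
  rw [Mo, integral_gaussianReal01]
  have h1 : ∫ x : ℝ, gaussianPDFReal 0 1 x * x ^ k
      = ∫ x : ℝ, gaussianPDFReal 0 1 (-x) * (-x) ^ k :=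
    (integral_neg_eq_self (fun x => gaussianPDFReal 0 1 x * x ^ k) volume).symm
  have h2 : ∀ x : ℝ, gaussianPDFReal 0 1 (-x) * (-x) ^ k
      = -(gaussianPDFReal 0 1 x * x ^ k) := by
    intro x
    rw [gaussianPDFReal_01, gaussianPDFReal_01, hk.neg_pow, neg_sq]
    ring
  simp_rw [h2, integral_neg] at h1
  linarith

lemma Mo_one : Mo 1 = 0 := Mo_odd ⟨0, rfl⟩
lemma Mo_three : Mo 3 = 0 := Mo_odd ⟨1, rfl⟩

lemma integral_pow_exp_two : ∫ x : ℝ, x ^ 2 * Real.exp (-(1/2) * x ^ 2) = Real.sqrt (2 * π) := by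
  calc ∫ x : ℝ, x ^ 2 * Real.exp (-(1/2) * x ^ 2)
      = 2 * ∫ x : ℝ in Set.Ioi 0, x ^ 2 * Real.exp (-(1/2) * x ^ 2) := by
        rw [← integral_comp_abs (f := fun y : ℝ => y ^ 2 * Real.exp (-(1/2) * y ^ 2))]
        simp only [sq_abs]
    _ = 2 * ∫ x : ℝ in Set.Ioi 0, x ^ (2:ℝ) * Real.exp (-(1/2) * x ^ (2:ℝ)) := by
        congr 1
        refine setIntegral_congr_fun measurableSet_Ioi fun x hx => ?_
        rw [Real.rpow_two]
    _ = 2 * ((1/2 : ℝ) ^ (-((2:ℝ) + 1) / 2) * (1 / 2) * Real.Gamma (((2:ℝ) + 1) / 2)) := by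
        rw [integral_rpow_mul_exp_neg_mul_rpow (by norm_num) (by norm_num) (by norm_num)]
    _ = Real.sqrt (2 * π) := by
        have hG : Real.Gamma (((2:ℝ) + 1) / 2) = (1/2) * Real.sqrt π := by
          rw [show ((2:ℝ) + 1) / 2 = 1/2 + 1 by norm_num, Real.Gamma_add_one (by norm_num),
            Real.Gamma_one_half_eq]
        have hp : ((1:ℝ)/2) ^ (-((2:ℝ) + 1) / 2) = 2 * Real.sqrt 2 := by
          rw [show (-((2:ℝ) + 1) / 2) = -(3/2 : ℝ) by norm_num,
            show (1/2 : ℝ) = 2⁻¹ by norm_num, Real.inv_rpow (by norm_num),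
            ← Real.rpow_neg (by norm_num), neg_neg,
            show (3/2 : ℝ) = 1 + 1/2 by norm_num, Real.rpow_add (by norm_num),
            Real.rpow_one, ← Real.sqrt_eq_rpow]
        rw [hG, hp, Real.sqrt_mul (by norm_num)]
        ring

lemma integral_pow_exp_four :
    ∫ x : ℝ, x ^ 4 * Real.exp (-(1/2) * x ^ 2) = 3 * Real.sqrt (2 * π) := by
  calc ∫ x : ℝ, x ^ 4 * Real.exp (-(1/2) * x ^ 2)
      = 2 * ∫ x : ℝ in Set.Ioi 0, x ^ 4 * Real.exp (-(1/2) * x ^ 2) := by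
        rw [← integral_comp_abs (f := fun y : ℝ => y ^ 4 * Real.exp (-(1/2) * y ^ 2))]
        congr 1
        ext x
        rw [sq_abs, show |x| ^ 4 = (|x| ^ 2) ^ 2 by ring, sq_abs]
        ring
    _ = 2 * ∫ x : ℝ in Set.Ioi 0, x ^ (4:ℝ) * Real.exp (-(1/2) * x ^ (2:ℝ)) := by
        congr 1
        refine setIntegral_congr_fun measurableSet_Ioi fun x hx => ?_
        rw [Real.rpow_two, show (4:ℝ) = ((4:ℕ):ℝ) by norm_num, Real.rpow_natCast]
    _ = 2 * ((1/2 : ℝ) ^ (-((4:ℝ) + 1) / 2) * (1 / 2) * Real.Gamma (((4:ℝ) + 1) / 2)) := by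
        rw [integral_rpow_mul_exp_neg_mul_rpow (by norm_num) (by norm_num) (by norm_num)]
    _ = 3 * Real.sqrt (2 * π) := by
        have hG : Real.Gamma (((4:ℝ) + 1) / 2) = (3/4) * Real.sqrt π := by
          rw [show ((4:ℝ) + 1) / 2 = 3/2 + 1 by norm_num, Real.Gamma_add_one (by norm_num),
            show (3/2 : ℝ) = 1/2 + 1 by norm_num, Real.Gamma_add_one (by norm_num),
            Real.Gamma_one_half_eq]
          ring
        have hp : ((1:ℝ)/2) ^ (-((4:ℝ) + 1) / 2) = 4 * Real.sqrt 2 := by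
          rw [show (-((4:ℝ) + 1) / 2) = -(5/2 : ℝ) by norm_num,
            show (1/2 : ℝ) = 2⁻¹ by norm_num, Real.inv_rpow (by norm_num),
            ← Real.rpow_neg (by norm_num), neg_neg,
            show (5/2 : ℝ) = 2 + 1/2 by norm_num, Real.rpow_add (by norm_num),
            ← Real.sqrt_eq_rpow]
          rw [show (2:ℝ) ^ (2:ℝ) = 4 by rw [Real.rpow_two]; norm_num]
        rw [hG, hp, Real.sqrt_mul (by norm_num)]
        ring

lemma Mo_even_eval (k : ℕ) (c : ℝ)
    (h : ∫ x : ℝ, x ^ k * Real.exp (-(1/2) * x ^ 2) = c * Real.sqrt (2 * π)) :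
    Mo k = c := by
  rw [Mo, integral_gaussianReal01]
  have heq : ∀ x : ℝ, gaussianPDFReal 0 1 x * x ^ k
      = (Real.sqrt (2 * π))⁻¹ * (x ^ k * Real.exp (-(1/2) * x ^ 2)) := by
    intro x; rw [gaussianPDFReal_01]; ring
  simp_rw [heq]
  rw [integral_const_mul, h]
  have hs : Real.sqrt (2 * π) ≠ 0 := by positivity
  field_simp

lemma Mo_two : Mo 2 = 1 := Mo_even_eval 2 1 (by rw [integral_pow_exp_two, one_mul])

lemma Mo_four : Mo 4 = 3 := Mo_even_eval 4 3 integral_pow_exp_four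

lemma integrable_monomial {ι : Type*} [Fintype ι] (e : ι → ℕ) :
    Integrable (fun θ : ι → ℝ => ∏ i, (θ i) ^ (e i)) (stdGaussian ι) := by
  letI : MeasureSpace ℝ := { volume := gaussianReal 0 1 }
  haveI : SigmaFinite (volume : Measure ℝ) := inferInstanceAs (SigmaFinite (gaussianReal 0 1))
  exact Integrable.fintype_prod (f := fun i (x : ℝ) => x ^ (e i))
    fun i => integrable_pow_gauss (e i)

lemma integral_monomial {ι : Type*} [Fintype ι] (e : ι → ℕ) :
    ∫ θ, ∏ i, (θ i) ^ (e i) ∂stdGaussian ι = ∏ i, Mo (e i) := by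
  letI : MeasureSpace ℝ := { volume := gaussianReal 0 1 }
  haveI : SigmaFinite (volume : Measure ℝ) := inferInstanceAs (SigmaFinite (gaussianReal 0 1))
  exact MeasureTheory.integral_fintype_prod_eq_prod (fun i (x : ℝ) => x ^ (e i))

def kd {ι : Type*} [DecidableEq ι] (a b : ι) : ℝ := if a = b then 1 else 0
def indN {ι : Type*} [DecidableEq ι] (a i : ι) : ℕ := if a = i then 1 else 0

lemma prod_pow_ind {ι : Type*} [Fintype ι] [DecidableEq ι] (y : ι → ℝ) (a : ι) :
    ∏ i, y i ^ indN a i = y a := by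
  simp [indN, pow_ite, Finset.prod_ite_eq]

lemma coord_prod_eq {ι : Type*} [Fintype ι] [DecidableEq ι] (y : ι → ℝ) (a b c d : ι) :
    y a * y b * y c * y d = ∏ i, y i ^ (indN a i + indN b i + indN c i + indN d i) := by
  simp only [pow_add, Finset.prod_mul_distrib, prod_pow_ind]

lemma P4 {ι : Type*} [Fintype ι] [DecidableEq ι] (a b c d : ι) :
    (∏ i, Mo (indN a i + indN b i + indN c i + indN d i))
      = kd a b * kd c d + kd a c * kd b d + kd a d * kd b c := by
  by_cases hab : a = b
  · subst hab
    by_cases hac : a = c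
    · subst hac
      by_cases had : a = d
      · subst had
        rw [Finset.prod_eq_single a (fun i _ hi => by
            simp [indN, Ne.symm hi, Mo_zero]) (by simp)]
        simp [indN, kd, Mo_four]
        norm_num
      · rw [Finset.prod_eq_zero (Finset.mem_univ d) (by simp [indN, had, Mo_one])]
        simp [kd, had]
    · by_cases had : a = d
      · subst had
        rw [Finset.prod_eq_zero (Finset.mem_univ c) (by
            simp [indN, hac, Ne.symm hac, Mo_one])]
        simp [kd, hac, Ne.symm hac]
      · by_cases hcd : c = d
        · subst hcd
          rw [(Finset.prod_subset (Finset.subset_univ ({a, c} : Finset ι)) (fun i _ hi => by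
              simp only [Finset.mem_insert, Finset.mem_singleton, not_or] at hi
              simp [indN, Ne.symm hi.1, Ne.symm hi.2, Mo_zero])).symm,
            Finset.prod_pair hac]
          simp [indN, kd, hac, Ne.symm hac, Mo_two]
        · rw [Finset.prod_eq_zero (Finset.mem_univ c) (by
            simp [indN, hac, Ne.symm hac, Ne.symm hcd, Mo_one])]
          simp [kd, hac, had, hcd]
  · by_cases hac : a = c
    · subst hac
      by_cases hbd : b = d
      · subst hbd
        rw [(Finset.prod_subset (Finset.subset_univ ({a, b} : Finset ι)) (fun i _ hi => by
            simp only [Finset.mem_insert, Finset.mem_singleton, not_or] at hi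
            simp [indN, Ne.symm hi.1, Ne.symm hi.2, Mo_zero])).symm,
          Finset.prod_pair hab]
        simp [indN, kd, hab, Ne.symm hab, Mo_two]
      · by_cases had : a = d
        · subst had
          rw [Finset.prod_eq_zero (Finset.mem_univ b) (by
              simp [indN, hab, Mo_one])]
          simp [kd, hab, Ne.symm hab, hbd]
        · rw [Finset.prod_eq_zero (Finset.mem_univ d) (by
              simp [indN, had, hbd, Mo_one])]
          simp [kd, had, hbd, hab]
    · by_cases had : a = d
      · subst had
        by_cases hbc : b = c
        · subst hbc
          rw [(Finset.prod_subset (Finset.subset_univ ({a, b} : Finset ι)) (fun i _ hi => by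
              simp only [Finset.mem_insert, Finset.mem_singleton, not_or] at hi
              simp [indN, Ne.symm hi.1, Ne.symm hi.2, Mo_zero])).symm,
            Finset.prod_pair hab]
          simp [indN, kd, hab, Ne.symm hab, Mo_two]
        · rw [Finset.prod_eq_zero (Finset.mem_univ b) (by
              simp [indN, hab, Ne.symm hbc, Mo_one])]
          simp [kd, hab, hbc, hac]
      · rw [Finset.prod_eq_zero (Finset.mem_univ a) (by
            simp [indN, Ne.symm hab, Ne.symm hac, Ne.symm had, Mo_one])]
        simp [kd, hab, hac, had]

lemma ite_ite {P : Prop} [Decidable P] (a b c : ℝ) :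
    (if P then (if P then a else b) else c) = if P then a else c := by
  split <;> simp [*]

section eight
variable {ι κ : Type*} [Fintype ι] [Fintype κ] [DecidableEq ι] [DecidableEq κ]

lemma eight_eq_monomial (a b c d : ι) (p q r s : κ) (θ : ι ⊕ κ → ℝ) :
    (θ (Sum.inl a) * θ (Sum.inl b) * θ (Sum.inl c) * θ (Sum.inl d)) *
      (θ (Sum.inr p) * θ (Sum.inr q) * θ (Sum.inr r) * θ (Sum.inr s))
    = ∏ t, θ t ^ (Sum.elim (fun i => indN a i + indN b i + indN c i + indN d i)
        (fun j => indN p j + indN q j + indN r j + indN s j) t) := by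
  rw [Fintype.prod_sum_type]
  simp only [Sum.elim_inl, Sum.elim_inr]
  rw [← coord_prod_eq (fun i => θ (Sum.inl i)) a b c d,
    ← coord_prod_eq (fun j => θ (Sum.inr j)) p q r s]

lemma integrable_eight (a b c d : ι) (p q r s : κ) :
    Integrable (fun θ : ι ⊕ κ → ℝ =>
      (θ (Sum.inl a) * θ (Sum.inl b) * θ (Sum.inl c) * θ (Sum.inl d)) *
        (θ (Sum.inr p) * θ (Sum.inr q) * θ (Sum.inr r) * θ (Sum.inr s)))
      (stdGaussian (ι ⊕ κ)) := by
  simp_rw [eight_eq_monomial]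
  exact integrable_monomial _

lemma integral_eight (a b c d : ι) (p q r s : κ) :
    ∫ θ, (θ (Sum.inl a) * θ (Sum.inl b) * θ (Sum.inl c) * θ (Sum.inl d)) *
        (θ (Sum.inr p) * θ (Sum.inr q) * θ (Sum.inr r) * θ (Sum.inr s))
        ∂stdGaussian (ι ⊕ κ)
      = (kd a b * kd c d + kd a c * kd b d + kd a d * kd b c) *
        (kd p q * kd r s + kd p r * kd q s + kd p s * kd q r) := by
  simp_rw [eight_eq_monomial]
  rw [integral_monomial, Fintype.prod_sum_type]
  simp only [Sum.elim_inl, Sum.elim_inr]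
  rw [P4 a b c d, P4 p q r s]

end eight

section terms
variable (n D : ℕ) (x1 x2 x3 x4 : Fin D → ℝ)

set_option maxHeartbeats 1000000 in
lemma Ts1t1 :
    ∑ p1 : Fin n × Fin D, ∑ p2 : Fin n × Fin D, ∑ p3 : Fin n × Fin D,
      ∑ p4 : Fin n × Fin D, x1 p1.2 * x2 p2.2 * x3 p3.2 * x4 p4.2 *
        ((kd p1.1 p2.1 * kd p3.1 p4.1) * (kd p1 p2 * kd p3 p4))
      = (n:ℝ)^2 * (ip x1 x2 * ip x3 x4) := by
  simp [kd, ip, mul_ite, ite_mul, Finset.sum_ite_eq, Finset.mul_sum, Finset.sum_mul, ite_ite,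
    Fintype.sum_prod_type, sq]
  rw [Finset.sum_comm]
  refine Finset.sum_congr rfl fun _ _ => Finset.sum_congr rfl fun _ _ => ?_
  ring

set_option maxHeartbeats 1000000 in
lemma Ts1t2 :
    ∑ p1 : Fin n × Fin D, ∑ p2 : Fin n × Fin D, ∑ p3 : Fin n × Fin D,
      ∑ p4 : Fin n × Fin D, x1 p1.2 * x2 p2.2 * x3 p3.2 * x4 p4.2 *
        ((kd p1.1 p2.1 * kd p3.1 p4.1) * (kd p1 p3 * kd p2 p4))
      = (n:ℝ) * (ip x1 x3 * ip x2 x4) := by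
  simp [kd, ip, mul_ite, ite_mul, Finset.sum_ite_eq, Finset.mul_sum, Finset.sum_mul, ite_ite,
    Fintype.sum_prod_type, sq]
  rw [Finset.sum_comm]
  refine Finset.sum_congr rfl fun _ _ => Finset.sum_congr rfl fun _ _ => ?_
  ring

set_option maxHeartbeats 1000000 in
lemma Ts1t3 :
    ∑ p1 : Fin n × Fin D, ∑ p2 : Fin n × Fin D, ∑ p3 : Fin n × Fin D,
      ∑ p4 : Fin n × Fin D, x1 p1.2 * x2 p2.2 * x3 p3.2 * x4 p4.2 *
        ((kd p1.1 p2.1 * kd p3.1 p4.1) * (kd p1 p4 * kd p2 p3))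
      = (n:ℝ) * (ip x1 x4 * ip x2 x3) := by
  simp [kd, ip, mul_ite, ite_mul, Finset.sum_ite_eq, Finset.mul_sum, Finset.sum_mul, ite_ite,
    Fintype.sum_prod_type, sq]
  rw [Finset.sum_comm]
  refine Finset.sum_congr rfl fun _ _ => Finset.sum_congr rfl fun _ _ => ?_
  ring

set_option maxHeartbeats 1000000 in
lemma Ts2t1 :
    ∑ p1 : Fin n × Fin D, ∑ p2 : Fin n × Fin D, ∑ p3 : Fin n × Fin D,
      ∑ p4 : Fin n × Fin D, x1 p1.2 * x2 p2.2 * x3 p3.2 * x4 p4.2 *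
        ((kd p1.1 p3.1 * kd p2.1 p4.1) * (kd p1 p2 * kd p3 p4))
      = (n:ℝ) * (ip x1 x2 * ip x3 x4) := by
  simp [kd, ip, mul_ite, ite_mul, Finset.sum_ite_eq, Finset.mul_sum, Finset.sum_mul, ite_ite,
    Fintype.sum_prod_type, sq]
  rw [Finset.sum_comm]
  refine Finset.sum_congr rfl fun _ _ => Finset.sum_congr rfl fun _ _ => ?_
  ring

set_option maxHeartbeats 1000000 in
lemma Ts2t2 :
    ∑ p1 : Fin n × Fin D, ∑ p2 : Fin n × Fin D, ∑ p3 : Fin n × Fin D,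
      ∑ p4 : Fin n × Fin D, x1 p1.2 * x2 p2.2 * x3 p3.2 * x4 p4.2 *
        ((kd p1.1 p3.1 * kd p2.1 p4.1) * (kd p1 p3 * kd p2 p4))
      = (n:ℝ)^2 * (ip x1 x3 * ip x2 x4) := by
  simp [kd, ip, mul_ite, ite_mul, Finset.sum_ite_eq, Finset.mul_sum, Finset.sum_mul, ite_ite,
    Fintype.sum_prod_type, sq]
  rw [Finset.sum_comm]
  refine Finset.sum_congr rfl fun _ _ => Finset.sum_congr rfl fun _ _ => ?_
  ring

set_option maxHeartbeats 1000000 in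
lemma Ts2t3 :
    ∑ p1 : Fin n × Fin D, ∑ p2 : Fin n × Fin D, ∑ p3 : Fin n × Fin D,
      ∑ p4 : Fin n × Fin D, x1 p1.2 * x2 p2.2 * x3 p3.2 * x4 p4.2 *
        ((kd p1.1 p3.1 * kd p2.1 p4.1) * (kd p1 p4 * kd p2 p3))
      = (n:ℝ) * (ip x1 x4 * ip x2 x3) := by
  simp [kd, ip, mul_ite, ite_mul, Finset.sum_ite_eq, Finset.mul_sum, Finset.sum_mul, ite_ite,
    Fintype.sum_prod_type, sq]
  rw [Finset.sum_comm]
  refine Finset.sum_congr rfl fun _ _ => Finset.sum_congr rfl fun _ _ => ?_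
  ring

set_option maxHeartbeats 1000000 in
lemma Ts3t1 :
    ∑ p1 : Fin n × Fin D, ∑ p2 : Fin n × Fin D, ∑ p3 : Fin n × Fin D,
      ∑ p4 : Fin n × Fin D, x1 p1.2 * x2 p2.2 * x3 p3.2 * x4 p4.2 *
        ((kd p1.1 p4.1 * kd p2.1 p3.1) * (kd p1 p2 * kd p3 p4))
      = (n:ℝ) * (ip x1 x2 * ip x3 x4) := by
  simp [kd, ip, mul_ite, ite_mul, Finset.sum_ite_eq, Finset.mul_sum, Finset.sum_mul, ite_ite,
    Fintype.sum_prod_type, sq]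
  rw [Finset.sum_comm]
  refine Finset.sum_congr rfl fun _ _ => Finset.sum_congr rfl fun _ _ => ?_
  ring

set_option maxHeartbeats 1000000 in
lemma Ts3t2 :
    ∑ p1 : Fin n × Fin D, ∑ p2 : Fin n × Fin D, ∑ p3 : Fin n × Fin D,
      ∑ p4 : Fin n × Fin D, x1 p1.2 * x2 p2.2 * x3 p3.2 * x4 p4.2 *
        ((kd p1.1 p4.1 * kd p2.1 p3.1) * (kd p1 p3 * kd p2 p4))
      = (n:ℝ) * (ip x1 x3 * ip x2 x4) := by
  simp [kd, ip, mul_ite, ite_mul, Finset.sum_ite_eq, Finset.mul_sum, Finset.sum_mul, ite_ite,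
    Fintype.sum_prod_type, sq]
  rw [Finset.sum_comm]
  refine Finset.sum_congr rfl fun _ _ => Finset.sum_congr rfl fun _ _ => ?_
  ring

set_option maxHeartbeats 1000000 in
lemma Ts3t3 :
    ∑ p1 : Fin n × Fin D, ∑ p2 : Fin n × Fin D, ∑ p3 : Fin n × Fin D,
      ∑ p4 : Fin n × Fin D, x1 p1.2 * x2 p2.2 * x3 p3.2 * x4 p4.2 *
        ((kd p1.1 p4.1 * kd p2.1 p3.1) * (kd p1 p4 * kd p2 p3))
      = (n:ℝ)^2 * (ip x1 x4 * ip x2 x3) := by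
  simp [kd, ip, mul_ite, ite_mul, Finset.sum_ite_eq, Finset.mul_sum, Finset.sum_mul, ite_ite,
    Fintype.sum_prod_type, sq]
  rw [Finset.sum_comm]
  refine Finset.sum_congr rfl fun _ _ => Finset.sum_congr rfl fun _ _ => ?_
  ring

end terms

section main
variable (n D : ℕ) (x1 x2 x3 x4 : Fin D → ℝ)

set_option maxHeartbeats 1000000 in
lemma contraction :
    ∑ p1 : Fin n × Fin D, ∑ p2 : Fin n × Fin D, ∑ p3 : Fin n × Fin D,
      ∑ p4 : Fin n × Fin D, x1 p1.2 * x2 p2.2 * x3 p3.2 * x4 p4.2 *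
        ((kd p1.1 p2.1 * kd p3.1 p4.1 + kd p1.1 p3.1 * kd p2.1 p4.1 + kd p1.1 p4.1 * kd p2.1 p3.1) *
         (kd p1 p2 * kd p3 p4 + kd p1 p3 * kd p2 p4 + kd p1 p4 * kd p2 p3))
      = ((n:ℝ)^2 + 2*n) * (ip x1 x2 * ip x3 x4 + ip x1 x3 * ip x2 x4 + ip x1 x4 * ip x2 x3) := by
  have hsplit : ∑ p1 : Fin n × Fin D, ∑ p2 : Fin n × Fin D, ∑ p3 : Fin n × Fin D,
      ∑ p4 : Fin n × Fin D, x1 p1.2 * x2 p2.2 * x3 p3.2 * x4 p4.2 *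
        ((kd p1.1 p2.1 * kd p3.1 p4.1 + kd p1.1 p3.1 * kd p2.1 p4.1 + kd p1.1 p4.1 * kd p2.1 p3.1) *
         (kd p1 p2 * kd p3 p4 + kd p1 p3 * kd p2 p4 + kd p1 p4 * kd p2 p3))
      = ∑ p1 : Fin n × Fin D, ∑ p2 : Fin n × Fin D, ∑ p3 : Fin n × Fin D,
      ∑ p4 : Fin n × Fin D,
        (x1 p1.2 * x2 p2.2 * x3 p3.2 * x4 p4.2 * ((kd p1.1 p2.1 * kd p3.1 p4.1) * (kd p1 p2 * kd p3 p4))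
        + x1 p1.2 * x2 p2.2 * x3 p3.2 * x4 p4.2 * ((kd p1.1 p2.1 * kd p3.1 p4.1) * (kd p1 p3 * kd p2 p4))
        + x1 p1.2 * x2 p2.2 * x3 p3.2 * x4 p4.2 * ((kd p1.1 p2.1 * kd p3.1 p4.1) * (kd p1 p4 * kd p2 p3))
        + x1 p1.2 * x2 p2.2 * x3 p3.2 * x4 p4.2 * ((kd p1.1 p3.1 * kd p2.1 p4.1) * (kd p1 p2 * kd p3 p4))
        + x1 p1.2 * x2 p2.2 * x3 p3.2 * x4 p4.2 * ((kd p1.1 p3.1 * kd p2.1 p4.1) * (kd p1 p3 * kd p2 p4))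
        + x1 p1.2 * x2 p2.2 * x3 p3.2 * x4 p4.2 * ((kd p1.1 p3.1 * kd p2.1 p4.1) * (kd p1 p4 * kd p2 p3))
        + x1 p1.2 * x2 p2.2 * x3 p3.2 * x4 p4.2 * ((kd p1.1 p4.1 * kd p2.1 p3.1) * (kd p1 p2 * kd p3 p4))
        + x1 p1.2 * x2 p2.2 * x3 p3.2 * x4 p4.2 * ((kd p1.1 p4.1 * kd p2.1 p3.1) * (kd p1 p3 * kd p2 p4))
        + x1 p1.2 * x2 p2.2 * x3 p3.2 * x4 p4.2 * ((kd p1.1 p4.1 * kd p2.1 p3.1) * (kd p1 p4 * kd p2 p3))) := by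
    refine Finset.sum_congr rfl fun _ _ => Finset.sum_congr rfl fun _ _ =>
      Finset.sum_congr rfl fun _ _ => Finset.sum_congr rfl fun _ _ => ?_
    ring
  rw [hsplit]
  simp only [Finset.sum_add_distrib]
  rw [Ts1t1 n D x1 x2 x3 x4, Ts1t2 n D x1 x2 x3 x4, Ts1t3 n D x1 x2 x3 x4,
    Ts2t1 n D x1 x2 x3 x4, Ts2t2 n D x1 x2 x3 x4, Ts2t3 n D x1 x2 x3 x4,
    Ts3t1 n D x1 x2 x3 x4, Ts3t2 n D x1 x2 x3 x4, Ts3t3 n D x1 x2 x3 x4]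
  ring

lemma net1_eq (θ : (Fin n ⊕ Fin n × Fin D) → ℝ) (x : Fin D → ℝ) :
    net1 n D θ x = ((n : ℝ) ^ (-(1 / 2 : ℝ))) *
      ∑ p : Fin n × Fin D, θ (Sum.inl p.1) * θ (Sum.inr p) * x p.2 := by
  rw [net1]
  congr 1
  rw [Fintype.sum_prod_type]
  refine Finset.sum_congr rfl fun i _ => ?_
  rw [Finset.mul_sum]
  exact Finset.sum_congr rfl fun α _ => by ring

set_option maxHeartbeats 1000000 in
lemma net_prod (θ : (Fin n ⊕ Fin n × Fin D) → ℝ) :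
    net1 n D θ x1 * net1 n D θ x2 * net1 n D θ x3 * net1 n D θ x4
      = ((n : ℝ) ^ (-(1 / 2 : ℝ)))^4 *
        ∑ p1 : Fin n × Fin D, ∑ p2 : Fin n × Fin D, ∑ p3 : Fin n × Fin D,
          ∑ p4 : Fin n × Fin D,
            (x1 p1.2 * x2 p2.2 * x3 p3.2 * x4 p4.2) *
              ((θ (Sum.inl p1.1) * θ (Sum.inl p2.1) * θ (Sum.inl p3.1) * θ (Sum.inl p4.1)) *
               (θ (Sum.inr p1) * θ (Sum.inr p2) * θ (Sum.inr p3) * θ (Sum.inr p4))) := by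
  have h : net1 n D θ x1 * net1 n D θ x2 * net1 n D θ x3 * net1 n D θ x4
      = net1 n D θ x4 * net1 n D θ x3 * net1 n D θ x2 * net1 n D θ x1 := by ring
  rw [h, net1_eq n D θ x1, net1_eq n D θ x2, net1_eq n D θ x3, net1_eq n D θ x4]
  simp only [Finset.sum_mul, Finset.mul_sum]
  refine Finset.sum_congr rfl fun _ _ => Finset.sum_congr rfl fun _ _ =>
    Finset.sum_congr rfl fun _ _ => Finset.sum_congr rfl fun _ _ => ?_
  ring

set_option maxHeartbeats 1000000 in
lemma master :
    fourPoint n D x1 x2 x3 x4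
      = ((n : ℝ) ^ (-(1 / 2 : ℝ)))^4 *
        (((n:ℝ)^2 + 2*n) * (ip x1 x2 * ip x3 x4 + ip x1 x3 * ip x2 x4 + ip x1 x4 * ip x2 x3)) := by
  have hint : ∀ p1 p2 p3 p4 : Fin n × Fin D,
      Integrable (fun θ : (Fin n ⊕ Fin n × Fin D) → ℝ =>
        (x1 p1.2 * x2 p2.2 * x3 p3.2 * x4 p4.2) *
          ((θ (Sum.inl p1.1) * θ (Sum.inl p2.1) * θ (Sum.inl p3.1) * θ (Sum.inl p4.1)) *
           (θ (Sum.inr p1) * θ (Sum.inr p2) * θ (Sum.inr p3) * θ (Sum.inr p4))))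
        (stdGaussian (Fin n ⊕ Fin n × Fin D)) := fun p1 p2 p3 p4 =>
    (integrable_eight p1.1 p2.1 p3.1 p4.1 p1 p2 p3 p4).const_mul _
  rw [fourPoint]
  simp only [net_prod n D x1 x2 x3 x4]
  rw [MeasureTheory.integral_const_mul]
  rw [MeasureTheory.integral_finset_sum _ (fun p1 _ => integrable_finset_sum _
    (fun p2 _ => integrable_finset_sum _ (fun p3 _ => integrable_finset_sum _
    (fun p4 _ => hint p1 p2 p3 p4))))]
  have hin : ∀ p1 : Fin n × Fin D,
      ∫ θ, ∑ p2 : Fin n × Fin D, ∑ p3 : Fin n × Fin D, ∑ p4 : Fin n × Fin D,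
        (x1 p1.2 * x2 p2.2 * x3 p3.2 * x4 p4.2) *
          ((θ (Sum.inl p1.1) * θ (Sum.inl p2.1) * θ (Sum.inl p3.1) * θ (Sum.inl p4.1)) *
           (θ (Sum.inr p1) * θ (Sum.inr p2) * θ (Sum.inr p3) * θ (Sum.inr p4)))
        ∂stdGaussian (Fin n ⊕ Fin n × Fin D)
      = ∑ p2 : Fin n × Fin D, ∑ p3 : Fin n × Fin D, ∑ p4 : Fin n × Fin D,
          (x1 p1.2 * x2 p2.2 * x3 p3.2 * x4 p4.2) *
            ((kd p1.1 p2.1 * kd p3.1 p4.1 + kd p1.1 p3.1 * kd p2.1 p4.1 + kd p1.1 p4.1 * kd p2.1 p3.1) *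
             (kd p1 p2 * kd p3 p4 + kd p1 p3 * kd p2 p4 + kd p1 p4 * kd p2 p3)) := by
    intro p1
    rw [MeasureTheory.integral_finset_sum _ (fun p2 _ => integrable_finset_sum _
      (fun p3 _ => integrable_finset_sum _ (fun p4 _ => hint p1 p2 p3 p4)))]
    refine Finset.sum_congr rfl fun p2 _ => ?_
    rw [MeasureTheory.integral_finset_sum _ (fun p3 _ => integrable_finset_sum _
      (fun p4 _ => hint p1 p2 p3 p4))]
    refine Finset.sum_congr rfl fun p3 _ => ?_
    rw [MeasureTheory.integral_finset_sum _ (fun p4 _ => hint p1 p2 p3 p4)]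
    refine Finset.sum_congr rfl fun p4 _ => ?_
    rw [MeasureTheory.integral_const_mul, integral_eight]
  simp only [hin]
  rw [contraction]

end main

/-- For the one-hidden-layer linear network with i.i.d. standard Gaussian parameters,
`E[f(x1) f(x2) f(x3) f(x4)] = (1 + 2/n)(⟨x1,x2⟩⟨x3,x4⟩ + ⟨x1,x3⟩⟨x2,x4⟩ + ⟨x1,x4⟩⟨x2,x3⟩)`
exactly; in particular, the four-point function is `O(1)` and its connected part is
`O(n⁻¹)` as `n → ∞`. -/
theorem four_point_function_one_hidden_layer (D : ℕ) (x1 x2 x3 x4 : Fin D → ℝ) :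
    (∀ n : ℕ, 0 < n →
      fourPoint n D x1 x2 x3 x4 =
        (1 + 2 / (n : ℝ)) *
          (ip x1 x2 * ip x3 x4 + ip x1 x3 * ip x2 x4 + ip x1 x4 * ip x2 x3)) ∧
    (fun n : ℕ => fourPoint n D x1 x2 x3 x4) =O[atTop] (fun _ => (1 : ℝ)) ∧
    (fun n : ℕ => fourPoint n D x1 x2 x3 x4 -
        (ip x1 x2 * ip x3 x4 + ip x1 x3 * ip x2 x4 + ip x1 x4 * ip x2 x3))
      =O[atTop] (fun n : ℕ => (n : ℝ)⁻¹) := by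

  set S := ip x1 x2 * ip x3 x4 + ip x1 x3 * ip x2 x4 + ip x1 x4 * ip x2 x3 with hS
  have key : ∀ n : ℕ, 0 < n → fourPoint n D x1 x2 x3 x4 = (1 + 2/(n:ℝ)) * S := by
    intro n hn
    rw [master]
    have hn' : (0:ℝ) < n := by exact_mod_cast hn
    have hc : ((n:ℝ) ^ (-(1/2:ℝ)))^4 = ((n:ℝ)^2)⁻¹ := by
      rw [← Real.rpow_natCast ((n:ℝ) ^ (-(1/2:ℝ))) 4, ← Real.rpow_mul (le_of_lt hn')]
      rw [show (-(1/2:ℝ)) * (4:ℕ) = -(2:ℝ) by push_cast; ring]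
      rw [Real.rpow_neg (le_of_lt hn'), Real.rpow_two]
    rw [hc, hS]
    have h2 : ((n:ℝ)^2) ≠ 0 := by positivity
    field_simp
  refine ⟨key, ?_, ?_⟩
  · rw [Asymptotics.isBigO_iff]
    refine ⟨3 * |S|, ?_⟩
    filter_upwards [Filter.eventually_ge_atTop 1] with n hn
    rw [key n (by omega)]
    have hn' : (1:ℝ) ≤ (n:ℝ) := by exact_mod_cast hn
    have h1 : (0:ℝ) ≤ 1 + 2/(n:ℝ) := by positivity
    have h2 : 1 + 2/(n:ℝ) ≤ 3 := by
      have h3 : 2/(n:ℝ) ≤ 2 := by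
        rw [div_le_iff₀ (by linarith)]; nlinarith
      linarith
    rw [Real.norm_eq_abs, norm_one, mul_one, abs_mul, abs_of_nonneg h1]
    exact mul_le_mul_of_nonneg_right h2 (abs_nonneg S)
  · rw [Asymptotics.isBigO_iff]
    refine ⟨2 * |S|, ?_⟩
    filter_upwards [Filter.eventually_ge_atTop 1] with n hn
    rw [key n (by omega)]
    have hn' : (1:ℝ) ≤ (n:ℝ) := by exact_mod_cast hn
    have heq : (1 + 2/(n:ℝ)) * S - S = (2 * S) * (n:ℝ)⁻¹ := by
      field_simp
      ring
    rw [heq, Real.norm_eq_abs, Real.norm_eq_abs, abs_mul, abs_mul]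
    rw [abs_of_nonneg (by positivity : (0:ℝ) ≤ (n:ℝ)⁻¹), abs_two]
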